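/- Let \widehat{W} be a folding subgroup of a Coxeter system (W,S) arising from an admissible partition \widehat{S} of S, with generators R = \{r_I : I \in \widehat{S}\} where r_I is the longest element of the finite parabolic W_I, and let \phi : \widehat{W} \to W be the inclusion. If w = r_{i_1} \cdots r_{i_k} is a reduced expression in the generators R, then \ell(\phi(w)) = \sum_{j=1}^k \ell(\phi(r_{i_j})), where \ell is the length function of W. -/

import Mathlib

open List
open scoped Classical
set_option linter.unusedSectionVars false

namespace Stmt11Aux

open CoxeterSystem

variable {B : Type*} {W : Type*} [Group W] {M : CoxeterMatrix B} (cs : CoxeterSystem M W)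

/-- indicator count mod 2 -/
noncomputable def icnt (l : List W) (w : W) : ZMod 2 :=
  (l.map (fun t => if t = w then (1 : ZMod 2) else 0)).sum

@[simp] lemma icnt_nil (w : W) : icnt [] w = 0 := rfl

lemma icnt_cons (a : W) (l : List W) (w : W) :
    icnt (a :: l) w = (if a = w then (1 : ZMod 2) else 0) + icnt l w := by
  simp [icnt]

lemma icnt_append (l₁ l₂ : List W) (w : W) :
    icnt (l₁ ++ l₂) w = icnt l₁ w + icnt l₂ w := by
  simp [icnt]

lemma mem_of_icnt_ne_zero {l : List W} {w : W} (h : icnt l w ≠ 0) : w ∈ l := by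
  induction l with
  | nil => simp at h
  | cons a l ih =>
    rw [icnt_cons] at h
    by_cases ha : a = w
    · simp [ha]
    · simp only [ha, if_false, zero_add] at h
      exact mem_cons_of_mem _ (ih h)

/-- The Bourbaki permutation representation on `W × ZMod 2`. -/
noncomputable def fperm (i : B) : Equiv.Perm (W × ZMod 2) :=
  Function.Involutive.toPerm
    (fun p => (cs.simple i * p.1 * cs.simple i, p.2 + if p.1 = cs.simple i then 1 else 0))
    (by
      intro p
      obtain ⟨x, ε⟩ := p
      have hiff : (cs.simple i * x * cs.simple i = cs.simple i) ↔ x = cs.simple i := by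
        constructor
        · intro h
          have := congrArg (fun z => cs.simple i * z * cs.simple i) h
          simpa [mul_assoc] using this
        · intro h; rw [h]; simp
      simp only [Prod.mk.injEq]
      refine ⟨by simp [mul_assoc], ?_⟩
      simp only [hiff]
      have h2 : (1 : ZMod 2) + 1 = 0 := by decide
      by_cases h : x = cs.simple i <;> simp [h, add_assoc, h2])

lemma fperm_apply (i : B) (x : W) (ε : ZMod 2) :
    fperm cs i (x, ε) = (cs.simple i * x * cs.simple i, ε + if x = cs.simple i then 1 else 0) :=
  rfl

lemma fperm_pow (i j : B) (n : ℕ) (x : W) (ε : ZMod 2) :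
    ((fperm cs i * fperm cs j) ^ n) (x, ε) =
      ((cs.simple i * cs.simple j) ^ n * x * (cs.simple j * cs.simple i) ^ n,
        ε + ∑ k ∈ Finset.range (2 * n),
          (if x = (cs.simple j * cs.simple i) ^ k * cs.simple j then (1 : ZMod 2) else 0)) := by
  induction n generalizing x ε with
  | zero => simp
  | succ n ih =>
    have hmul : ((fperm cs i * fperm cs j) ^ (n + 1)) (x, ε)
        = ((fperm cs i * fperm cs j) ^ n) ((fperm cs i) ((fperm cs j) (x, ε))) := by
      rw [pow_succ]
      rfl
    rw [hmul, fperm_apply, fperm_apply, ih, Prod.mk.injEq]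
    set a := cs.simple i * cs.simple j with ha
    set p := cs.simple j * cs.simple i with hp
    have hpa : a⁻¹ = p := by
      rw [ha, hp, mul_inv_rev, cs.inv_simple, cs.inv_simple]
    constructor
    · -- first components
      show a ^ n * (cs.simple i * (cs.simple j * x * cs.simple j) * cs.simple i) * p ^ n
          = a ^ (n+1) * x * p ^ (n+1)
      rw [pow_succ, pow_succ']
      simp [ha, hp, mul_assoc]
    · -- second components
      show (ε + (if x = cs.simple j then 1 else 0)
            + (if cs.simple j * x * cs.simple j = cs.simple i then (1:ZMod 2) else 0))
          + ∑ k ∈ Finset.range (2 * n),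
             (if cs.simple i * (cs.simple j * x * cs.simple j) * cs.simple i
                 = p ^ k * cs.simple j then (1:ZMod 2) else 0)
          = ε + ∑ k ∈ Finset.range (2 * (n+1)),
             (if x = p ^ k * cs.simple j then (1:ZMod 2) else 0)
      have h2 : 2 * (n + 1) = 2 * n + 1 + 1 := by ring
      rw [h2, Finset.sum_range_succ', Finset.sum_range_succ']
      have e0 : (if x = p ^ 0 * cs.simple j then (1:ZMod 2) else 0)
          = (if x = cs.simple j then (1:ZMod 2) else 0) := by
        norm_num
      have e1 : (if x = p ^ (0+1) * cs.simple j then (1:ZMod 2) else 0)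
          = (if cs.simple j * x * cs.simple j = cs.simple i then (1:ZMod 2) else 0) := by
        congr 1
        rw [eq_iff_iff]
        constructor
        · intro h
          rw [h, hp]
          simp [mul_assoc]
        · intro h
          have : x = cs.simple j * cs.simple i * cs.simple j := by
            have := congrArg (fun z => cs.simple j * z * cs.simple j) h
            simpa [mul_assoc] using this
          rw [this, hp]
          simp [mul_assoc]
      have e2 : ∀ k, (if cs.simple i * (cs.simple j * x * cs.simple j) * cs.simple i
                 = p ^ k * cs.simple j then (1:ZMod 2) else 0)
          = (if x = p ^ (k + 1 + 1) * cs.simple j then (1:ZMod 2) else 0) := by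
        intro k
        congr 1
        rw [eq_iff_iff]
        have key : cs.simple i * (cs.simple j * x * cs.simple j) * cs.simple i
            = a * x * p := by
          rw [ha, hp]; group
        rw [key]
        constructor
        · intro h
          have hx : x = a⁻¹ * (p ^ k * cs.simple j) * p⁻¹ := by
            rw [← h]; group
          rw [hx, hpa]
          have hsp : cs.simple j * p⁻¹ = p * cs.simple j := by
            rw [hp]
            simp [mul_assoc]
          calc p * (p ^ k * cs.simple j) * p⁻¹ = p ^ (k+1) * (cs.simple j * p⁻¹) := by group
            _ = p ^ (k+1) * (p * cs.simple j) := by rw [hsp]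
            _ = p ^ (k+1+1) * cs.simple j := by group
        · intro h
          rw [h]
          have hsp : cs.simple j * p⁻¹ = p * cs.simple j := by
            rw [hp]; simp [mul_assoc]
          have : a * (p ^ (k+1+1) * cs.simple j) * p = p⁻¹ * p ^ (k+1+1) * cs.simple j * p := by
            rw [← hpa]; group
          rw [this]
          have : p⁻¹ * p ^ (k+1+1) * cs.simple j * p = p ^ (k+1) * cs.simple j * p := by group
          rw [this]
          have hq : cs.simple j * p = p⁻¹ * cs.simple j := by
            rw [hp]; simp [mul_assoc]
          calc p ^ (k+1) * cs.simple j * p = p ^ (k+1) * (cs.simple j * p) := by group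
            _ = p ^ (k+1) * (p⁻¹ * cs.simple j) := by rw [hq]
            _ = p ^ k * cs.simple j := by group
      rw [e0, e1]
      rw [Finset.sum_congr rfl (fun k _ => e2 k)]
      abel


lemma fperm_liftable : M.IsLiftable (fperm cs) := by
  intro i j
  apply Equiv.ext
  rintro ⟨x, ε⟩
  rw [Equiv.Perm.coe_one, id_eq, fperm_pow, cs.simple_mul_simple_pow i j,
    cs.simple_mul_simple_pow' i j]
  simp only [one_mul, mul_one]
  have hsum : ∑ k ∈ Finset.range (2 * M i j),
      (if x = (cs.simple j * cs.simple i) ^ k * cs.simple j then (1 : ZMod 2) else 0) = 0 := by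
    rw [two_mul, Finset.sum_range_add]
    have hper : ∀ k : ℕ,
        (if x = (cs.simple j * cs.simple i) ^ (M i j + k) * cs.simple j then (1 : ZMod 2) else 0)
        = (if x = (cs.simple j * cs.simple i) ^ k * cs.simple j then (1 : ZMod 2) else 0) := by
      intro k
      congr 2
      rw [pow_add, cs.simple_mul_simple_pow' i j, one_mul]
    rw [Finset.sum_congr rfl (fun k _ => hper k), ← two_smul ℕ]
    have : (2 : ℕ) • (∑ k ∈ Finset.range (M i j),
        (if x = (cs.simple j * cs.simple i) ^ k * cs.simple j then (1 : ZMod 2) else 0)) =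
        2 * (∑ k ∈ Finset.range (M i j),
        (if x = (cs.simple j * cs.simple i) ^ k * cs.simple j then (1 : ZMod 2) else 0)) := by
      simp [nsmul_eq_mul]
    rw [this]
    have h2 : (2 : ZMod 2) = 0 := by decide
    rw [h2, zero_mul]
  rw [hsum, add_zero]

/-- The permutation representation as a monoid hom. -/
noncomputable def muRep : W →* Equiv.Perm (W × ZMod 2) :=
  cs.lift ⟨fperm cs, fperm_liftable cs⟩

@[simp] lemma muRep_simple (i : B) : muRep cs (cs.simple i) = fperm cs i :=
  cs.lift_apply_simple (fperm_liftable cs) i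

lemma muRep_wordProd (ω : List B) (x : W) (ε : ZMod 2) :
    muRep cs (cs.wordProd ω) (x, ε)
      = (cs.wordProd ω * x * (cs.wordProd ω)⁻¹, ε + icnt (cs.rightInvSeq ω) x) := by
  induction ω generalizing x ε with
  | nil => simp [cs.wordProd_nil]
  | cons i ω ih =>
    rw [cs.wordProd_cons, map_mul]
    have : (muRep cs (cs.simple i) * muRep cs (cs.wordProd ω)) (x, ε)
        = muRep cs (cs.simple i) (muRep cs (cs.wordProd ω) (x, ε)) := rfl
    rw [this, ih, muRep_simple, fperm_apply]
    have hris : cs.rightInvSeq (i :: ω)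
        = ((cs.wordProd ω)⁻¹ * cs.simple i * cs.wordProd ω) :: cs.rightInvSeq ω := rfl
    rw [hris, icnt_cons, Prod.mk.injEq]
    constructor
    · rw [mul_inv_rev, cs.inv_simple]
      group
    · have hcond : (cs.wordProd ω * x * (cs.wordProd ω)⁻¹ = cs.simple i)
          ↔ ((cs.wordProd ω)⁻¹ * cs.simple i * cs.wordProd ω = x) := by
        constructor
        · intro h; rw [← h]; group
        · intro h; rw [← h]; group
      simp only [hcond]
      abel

/-- word-independent parity function -/
noncomputable def eta (w t : W) : ZMod 2 := (muRep cs w (t, 0)).2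

lemma eta_wordProd (ω : List B) (t : W) :
    eta cs (cs.wordProd ω) t = icnt (cs.rightInvSeq ω) t := by
  rw [eta, muRep_wordProd, zero_add]

lemma muRep_apply (w x : W) (ε : ZMod 2) :
    muRep cs w (x, ε) = (w * x * w⁻¹, ε + eta cs w x) := by
  obtain ⟨ω, rfl⟩ := cs.wordProd_surjective w
  rw [muRep_wordProd, eta_wordProd]

lemma eta_mul (u v t : W) :
    eta cs (u * v) t = eta cs v t + eta cs u (v * t * v⁻¹) := by
  have h2 : muRep cs (u * v) (t, 0) = muRep cs u (muRep cs v (t, 0)) := by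
    rw [map_mul]; rfl
  rw [muRep_apply cs v t 0, muRep_apply cs u (v * t * v⁻¹) (0 + eta cs v t),
      muRep_apply cs (u*v) t 0] at h2
  have h3 := congrArg Prod.snd h2
  simp only at h3
  simpa [add_assoc] using h3

lemma eta_simple (i : B) (t : W) :
    eta cs (cs.simple i) t = if cs.simple i = t then 1 else 0 := by
  have : cs.simple i = cs.wordProd [i] := by simp
  rw [this, eta_wordProd]
  have : cs.rightInvSeq [i] = [cs.simple i] := by simp
  rw [this, icnt_cons, icnt_nil, add_zero]
  simp

/-- eta = 1 implies membership in any right inversion sequence -/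
lemma mem_ris_of_eta_one {ω : List B} {t : W} (h : eta cs (cs.wordProd ω) t = 1) :
    t ∈ cs.rightInvSeq ω := by
  rw [eta_wordProd] at h
  apply mem_of_icnt_ne_zero
  rw [h]
  decide

lemma isRightInversion_of_eta_one {w t : W} (ht : cs.IsReflection t)
    (h : eta cs w t = 1) : cs.IsRightInversion w t := by
  obtain ⟨ω, hω, rfl⟩ := cs.exists_reduced_word' w
  exact cs.isRightInversion_of_mem_rightInvSeq hω (mem_ris_of_eta_one cs h)

lemma eta_refl_self {t : W} (ht : cs.IsReflection t) : eta cs t t = 1 := by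
  obtain ⟨w, i, rfl⟩ := ht
  obtain ⟨ω, rfl⟩ := cs.wordProd_surjective w
  induction ω with
  | nil =>
    simp only [cs.wordProd_nil, one_mul, inv_one, mul_one]
    rw [eta_simple]
    simp
  | cons k ω ih =>
    rw [cs.wordProd_cons]
    set t' := cs.wordProd ω * cs.simple i * (cs.wordProd ω)⁻¹ with ht'
    have hinv : t'⁻¹ = t' := by
      rw [ht']
      simp [mul_inv_rev, mul_assoc]
    have hexp : cs.simple k * cs.wordProd ω * cs.simple i * (cs.simple k * cs.wordProd ω)⁻¹
        = cs.simple k * t' * cs.simple k := by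
      rw [ht', mul_inv_rev, cs.inv_simple]; group
    rw [hexp]
    by_cases hc : t' = cs.simple k
    · rw [hc]
      have hkk : cs.simple k * cs.simple k * cs.simple k = cs.simple k := by
        rw [cs.simple_mul_simple_self, one_mul]
      rw [hkk, ← hc]
      exact ih
    · set u := cs.simple k * t' * cs.simple k with hu
      have hc' : ¬ cs.simple k = t' := fun h => hc h.symm
      have e1 : eta cs u u = eta cs (t' * cs.simple k) u
          + eta cs (cs.simple k) ((t' * cs.simple k) * u * (t' * cs.simple k)⁻¹) := by
        have hx : u = cs.simple k * (t' * cs.simple k) := by rw [hu, mul_assoc]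
        nth_rewrite 1 [hx]
        rw [eta_mul]
      have e2 : (t' * cs.simple k) * u * (t' * cs.simple k)⁻¹ = t' := by
        rw [hu, mul_inv_rev, cs.inv_simple]
        calc t' * cs.simple k * (cs.simple k * t' * cs.simple k) * (cs.simple k * t'⁻¹)
            = t' * (cs.simple k * cs.simple k) * t' * (cs.simple k * cs.simple k) * t'⁻¹ := by
              group
          _ = t' := by rw [cs.simple_mul_simple_self]; group
      have e3 : eta cs (t' * cs.simple k) u
          = eta cs (cs.simple k) u + eta cs t' (cs.simple k * u * (cs.simple k)⁻¹) :=
        eta_mul ..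
      have e4 : cs.simple k * u * (cs.simple k)⁻¹ = t' := by
        rw [hu, cs.inv_simple]
        simp [mul_assoc]
      have e5 : eta cs (cs.simple k) u = 0 := by
        rw [eta_simple, if_neg]
        intro hek
        apply hc
        calc t' = cs.simple k * u * cs.simple k := by rw [hu]; simp [mul_assoc]
          _ = cs.simple k := by
              rw [← hek, cs.simple_mul_simple_self, one_mul]
      have e6 : eta cs (cs.simple k) t' = 0 := by
        rw [eta_simple, if_neg hc']
      rw [e1, e2, e3, e4, e5, e6, zero_add, add_zero]
      exact ih

lemma eta_one_of_isRightInversion {w t : W} (h : cs.IsRightInversion w t) :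
    eta cs w t = 1 := by
  obtain ⟨ht, hlen⟩ := h
  have hw : w = (w * t) * t := by
    rw [mul_assoc, ht.mul_self, mul_one]
  have h1 : eta cs ((w * t) * t) t = eta cs t t + eta cs (w * t) (t * t * t⁻¹) := eta_mul ..
  have h2 : t * t * t⁻¹ = t := by rw [ht.mul_self, one_mul, ht.inv]
  rw [h2, eta_refl_self cs ht] at h1
  have h3 : eta cs (w * t) t = 0 := by
    rcases (by decide : ∀ x : ZMod 2, x = 0 ∨ x = 1) (eta cs (w * t) t) with h | h
    · exact h
    · exfalso
      have := isRightInversion_of_eta_one cs ht h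
      have h4 : w * t * t = w := by rw [mul_assoc, ht.mul_self, mul_one]
      rw [CoxeterSystem.IsRightInversion, h4] at this
      omega
  rw [h3, add_zero] at h1
  rw [← hw] at h1
  exact h1

/-- Strong exchange membership -/
lemma mem_ris_of_isRightInversion {ω : List B} {t : W} (hω : cs.IsReduced ω)
    (h : cs.IsRightInversion (cs.wordProd ω) t) : t ∈ cs.rightInvSeq ω :=
  mem_ris_of_eta_one cs (eta_one_of_isRightInversion cs h)


/-! ### Part 2: parabolic subgroups -/

section Parabolic

variable (I : Set B)

lemma wordProd_mem_parabolic {ω : List B} (h : ∀ b ∈ ω, b ∈ I) :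
    cs.wordProd ω ∈ Subgroup.closure (cs.simple '' I) := by
  induction ω with
  | nil =>
    rw [cs.wordProd_nil]
    exact one_mem _
  | cons i ω ih =>
    rw [cs.wordProd_cons]
    exact mul_mem (Subgroup.subset_closure ⟨i, h i (mem_cons_self ..), rfl⟩)
      (ih (fun b hb => h b (mem_cons_of_mem _ hb)))

lemma exists_word_of_mem_parabolic {u : W} (hu : u ∈ Subgroup.closure (cs.simple '' I)) :
    ∃ ω : List B, (∀ b ∈ ω, b ∈ I) ∧ cs.wordProd ω = u := by
  induction hu using Subgroup.closure_induction with
  | mem x hx =>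
    obtain ⟨i, hi, rfl⟩ := hx
    exact ⟨[i], by simpa using hi, by simp⟩
  | one => exact ⟨[], by simp, by simp⟩
  | mul x y hx hy ihx ihy =>
    obtain ⟨ω₁, h1, hp1⟩ := ihx
    obtain ⟨ω₂, h2, hp2⟩ := ihy
    refine ⟨ω₁ ++ ω₂, ?_, ?_⟩
    · intro b hb
      rcases mem_append.mp hb with h | h
      exacts [h1 b h, h2 b h]
    · rw [cs.wordProd_append, hp1, hp2]
  | inv x hx ihx =>
    obtain ⟨ω, h1, hp⟩ := ihx
    exact ⟨ω.reverse, fun b hb => h1 b (mem_reverse.mp hb), by rw [cs.wordProd_reverse, hp]⟩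

lemma exists_delete_two {ω : List B} (h : ¬ cs.IsReduced ω) :
    ∃ ω' : List B, (∀ b ∈ ω', b ∈ ω) ∧ ω'.length + 2 = ω.length ∧
      cs.wordProd ω' = cs.wordProd ω := by
  classical
  have hex : ∃ k, ¬ cs.IsReduced (ω.take (k+1)) :=
    ⟨ω.length, by rwa [take_of_length_le (by omega)]⟩
  set k := Nat.find hex with hk
  have hknr : ¬ cs.IsReduced (ω.take (k+1)) := Nat.find_spec hex
  have hkmin : ∀ j, j < k → cs.IsReduced (ω.take (j+1)) := fun j hj =>
    not_not.mp (Nat.find_min hex hj)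
  have hred : cs.IsReduced (ω.take k) := by
    rcases Nat.eq_zero_or_pos k with h0 | hpos
    · rw [h0]
      simp [CoxeterSystem.IsReduced]
    · have := hkmin (k-1) (by omega)
      rwa [Nat.sub_add_cancel hpos] at this
  have hklt : k < ω.length := by
    by_contra hge
    push_neg at hge
    rw [take_of_length_le hge] at hred
    exact h hred
  set b := ω.get ⟨k, hklt⟩ with hb
  have htk : ω.take (k+1) = ω.take k ++ [b] := by
    rw [take_succ, getElem?_eq_getElem hklt]
    rfl
  have hlt : cs.length (cs.wordProd (ω.take k)) = k := by
    have := hred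
    rw [CoxeterSystem.IsReduced] at this
    rw [this, length_take]
    omega
  have hdesc : cs.length (cs.wordProd (ω.take k) * cs.simple b) + 1
      = cs.length (cs.wordProd (ω.take k)) := by
    rcases cs.length_mul_simple (cs.wordProd (ω.take k)) b with hasc | hdes
    · exfalso
      apply hknr
      rw [CoxeterSystem.IsReduced, htk, cs.wordProd_append, cs.wordProd_singleton, hasc, hlt]
      simp [length_take]
      omega
    · exact hdes
  have hinv : cs.IsRightInversion (cs.wordProd (ω.take k)) (cs.simple b) :=
    ⟨cs.isReflection_simple b, by omega⟩
  have hmem : cs.simple b ∈ cs.rightInvSeq (ω.take k) :=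
    mem_ris_of_isRightInversion cs hred hinv
  obtain ⟨p, hp, hgp⟩ := List.mem_iff_getElem.mp hmem
  have hp' : p < (ω.take k).length := by
    rwa [cs.length_rightInvSeq] at hp
  have herase : cs.wordProd (ω.take k) * cs.simple b = cs.wordProd ((ω.take k).eraseIdx p) := by
    rw [← cs.wordProd_mul_getD_rightInvSeq]
    congr 1
    rw [List.getD_eq_getElem _ _ hp, hgp]
  refine ⟨(ω.take k).eraseIdx p ++ ω.drop (k+1), ?_, ?_, ?_⟩
  · intro x hx
    rcases mem_append.mp hx with h' | h'
    · exact (List.take_sublist k ω).subset (((ω.take k).eraseIdx_sublist p).subset h')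
    · exact (List.drop_sublist (k+1) ω).subset h'
  · have h1 : ((ω.take k).eraseIdx p).length + 1 = (ω.take k).length :=
      length_eraseIdx_add_one hp'
    have h2 : (ω.take k).length = k := by rw [length_take]; omega
    rw [length_append, length_drop]
    omega
  · rw [cs.wordProd_append, ← herase]
    have h3 : cs.wordProd (ω.take k) * cs.simple b = cs.wordProd (ω.take (k+1)) := by
      rw [htk, cs.wordProd_append, cs.wordProd_singleton]
    rw [h3, ← cs.wordProd_append, take_append_drop]

lemma exists_reduced_word_inI {u : W} (hu : u ∈ Subgroup.closure (cs.simple '' I)) :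
    ∃ ω : List B, (∀ b ∈ ω, b ∈ I) ∧ cs.IsReduced ω ∧ cs.wordProd ω = u := by
  obtain ⟨ω, hmem, rfl⟩ := exists_word_of_mem_parabolic cs I hu
  suffices haux : ∀ n (ω : List B), ω.length ≤ n → (∀ b ∈ ω, b ∈ I) →
      ∃ ω', (∀ b ∈ ω', b ∈ I) ∧ cs.IsReduced ω' ∧ cs.wordProd ω' = cs.wordProd ω by
    exact haux ω.length ω le_rfl hmem
  intro n
  induction n with
  | zero =>
    intro ω hlen hmem'
    rw [List.eq_nil_of_length_eq_zero (Nat.le_zero.mp hlen)]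
    exact ⟨[], by simp, by simp [CoxeterSystem.IsReduced], rfl⟩
  | succ n ih =>
    intro ω hlen hmem'
    by_cases hr : cs.IsReduced ω
    · exact ⟨ω, hmem', hr, rfl⟩
    · obtain ⟨ω', hsub, hlen', hprod⟩ := exists_delete_two cs hr
      obtain ⟨ω'', h1, h2, h3⟩ := ih ω' (by omega) (fun b hb => hmem' b (hsub b hb))
      exact ⟨ω'', h1, h2, h3.trans hprod⟩

lemma ris_mem_parabolic {ω : List B} (hω : ∀ b ∈ ω, b ∈ I) {t : W}
    (ht : t ∈ cs.rightInvSeq ω) : t ∈ Subgroup.closure (cs.simple '' I) := by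
  induction ω with
  | nil => simp at ht
  | cons i ω ih =>
    have hris : cs.rightInvSeq (i :: ω)
        = ((cs.wordProd ω)⁻¹ * cs.simple i * cs.wordProd ω) :: cs.rightInvSeq ω := rfl
    rw [hris, mem_cons] at ht
    rcases ht with rfl | ht
    · have hmem := wordProd_mem_parabolic cs I (fun b hb => hω b (mem_cons_of_mem _ hb))
      exact mul_mem (mul_mem (inv_mem hmem)
        (Subgroup.subset_closure ⟨i, hω i (mem_cons_self ..), rfl⟩)) hmem
    · exact ih (fun b hb => hω b (mem_cons_of_mem _ hb)) ht

lemma ris_append (α β : List B) :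
    cs.rightInvSeq (α ++ β)
      = (cs.rightInvSeq α).map (fun t => (cs.wordProd β)⁻¹ * t * cs.wordProd β)
        ++ cs.rightInvSeq β := by
  induction α with
  | nil => simp
  | cons i α ih =>
    have h1 : cs.rightInvSeq ((i :: α) ++ β)
        = ((cs.wordProd (α ++ β))⁻¹ * cs.simple i * cs.wordProd (α ++ β))
          :: cs.rightInvSeq (α ++ β) := rfl
    have h2 : cs.rightInvSeq (i :: α)
        = ((cs.wordProd α)⁻¹ * cs.simple i * cs.wordProd α) :: cs.rightInvSeq α := rfl
    rw [h1, h2, ih]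
    simp [cs.wordProd_append, mul_inv_rev, mul_assoc]

lemma min_coset_add {w₀ : W}
    (hmin : ∀ c ∈ Subgroup.closure (cs.simple '' I), cs.length w₀ ≤ cs.length (w₀ * c)) :
    ∀ u ∈ Subgroup.closure (cs.simple '' I),
      cs.length (w₀ * u) = cs.length w₀ + cs.length u := by
  suffices haux : ∀ n, ∀ u ∈ Subgroup.closure (cs.simple '' I), cs.length u = n →
      cs.length (w₀ * u) = cs.length w₀ + cs.length u by
    intro u hu; exact haux _ u hu rfl
  intro n
  induction n using Nat.strong_induction_on with
  | _ n ihn =>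
  intro u hu hlu
  rcases eq_or_ne u 1 with rfl | hne
  · simp
  obtain ⟨ωu, hωmem, hωred, hωprod⟩ := exists_reduced_word_inI cs I hu
  have hωne : ωu ≠ [] := by
    rintro rfl
    rw [cs.wordProd_nil] at hωprod
    exact hne hωprod.symm
  obtain ⟨ωu', i, rfl⟩ := ωu.eq_nil_or_concat'.resolve_left hωne
  have hi : i ∈ I := hωmem i (by simp)
  have hωmem' : ∀ b ∈ ωu', b ∈ I := fun b hb => hωmem b (by simp [hb])
  have hred' : cs.IsReduced ωu' := by
    have := hωred.take ωu'.length
    rwa [take_left] at this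
  set u' := cs.wordProd ωu' with hu'def
  have hu' : u' ∈ Subgroup.closure (cs.simple '' I) := wordProd_mem_parabolic cs I hωmem'
  have hlu' : cs.length u' = ωu'.length := hred'
  have hlu2 : cs.length u = ωu'.length + 1 := by
    rw [← hωprod]
    have := hωred
    rw [CoxeterSystem.IsReduced] at this
    rw [this, length_append]
    simp
  have husi : u = u' * cs.simple i := by
    rw [← hωprod, cs.wordProd_append, cs.wordProd_singleton]
  have ihu' : cs.length (w₀ * u') = cs.length w₀ + cs.length u' := by
    apply ihn (cs.length u') (by omega) u' hu' rfl
  rcases cs.length_mul_simple (w₀ * u') i with hasc | hdes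
  · have hgoal : w₀ * u = (w₀ * u') * cs.simple i := by rw [husi, mul_assoc]
    rw [hgoal, hasc, ihu', hlu', hlu2]
    omega
  · exfalso
    obtain ⟨α, hαred, hw₀eq⟩ := cs.exists_reduced_word' w₀
    have hπA : cs.wordProd (α ++ ωu') = w₀ * u' := by
      rw [cs.wordProd_append, ← hw₀eq]
    have hAred : cs.IsReduced (α ++ ωu') := by
      rw [CoxeterSystem.IsReduced, hπA, ihu', length_append, hlu']
      congr 1
      rw [hw₀eq]
      exact hαred
    have hinv : cs.IsRightInversion (cs.wordProd (α ++ ωu')) (cs.simple i) := by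
      refine ⟨cs.isReflection_simple i, ?_⟩
      rw [hπA]
      omega
    have hmem : cs.simple i ∈ cs.rightInvSeq (α ++ ωu') :=
      mem_ris_of_isRightInversion cs hAred hinv
    rw [ris_append, mem_append] at hmem
    rcases hmem with hmem | hmem
    · obtain ⟨t, htm, heq⟩ := List.mem_map.mp hmem
      obtain ⟨p, hp, hgp⟩ := List.mem_iff_getElem.mp htm
      have hp' : p < α.length := by rwa [cs.length_rightInvSeq] at hp
      have herase : w₀ * t = cs.wordProd (α.eraseIdx p) := by
        rw [hw₀eq, ← cs.wordProd_mul_getD_rightInvSeq]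
        congr 1
        rw [List.getD_eq_getElem _ _ hp, hgp]
      have hlen1 : cs.length (w₀ * t) ≤ α.length - 1 := by
        rw [herase]
        have h1 := cs.length_wordProd_le (α.eraseIdx p)
        have h2 : (α.eraseIdx p).length + 1 = α.length := length_eraseIdx_add_one hp'
        omega
      have htmem : t ∈ Subgroup.closure (cs.simple '' I) := by
        have : t = u' * cs.simple i * u'⁻¹ := by
          rw [← heq, hu'def]
          group
        rw [this]
        exact mul_mem (mul_mem hu' (Subgroup.subset_closure ⟨i, hi, rfl⟩)) (inv_mem hu')
      have := hmin t htmem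
      have hαlen : α.length = cs.length w₀ := by
        rw [hw₀eq]
        exact hαred.symm
      omega
    · obtain ⟨p, hp, hgp⟩ := List.mem_iff_getElem.mp hmem
      have hp' : p < ωu'.length := by rwa [cs.length_rightInvSeq] at hp
      have herase : u' * cs.simple i = cs.wordProd (ωu'.eraseIdx p) := by
        rw [hu'def, ← cs.wordProd_mul_getD_rightInvSeq]
        congr 1
        rw [List.getD_eq_getElem _ _ hp, hgp]
      have h1 := cs.length_wordProd_le (ωu'.eraseIdx p)
      have h2 : (ωu'.eraseIdx p).length + 1 = ωu'.length := length_eraseIdx_add_one hp'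
      rw [← herase, ← husi] at h1
      omega

lemma exists_coset_min (w : W) :
    ∃ w₀ u₀, u₀ ∈ Subgroup.closure (cs.simple '' I) ∧ w = w₀ * u₀ ∧
      ∀ u ∈ Subgroup.closure (cs.simple '' I),
        cs.length (w₀ * u) = cs.length w₀ + cs.length u := by
  classical
  have hne : {n | ∃ u ∈ Subgroup.closure (cs.simple '' I), cs.length (w * u) = n}.Nonempty :=
    ⟨cs.length (w * 1), 1, one_mem _, rfl⟩
  obtain ⟨um, hum, hlenm⟩ := Nat.sInf_mem hne
  refine ⟨w * um, um⁻¹, inv_mem hum, by group, ?_⟩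
  apply min_coset_add
  intro c hc
  have hmem : cs.length ((w * um) * c)
      ∈ {n | ∃ u ∈ Subgroup.closure (cs.simple '' I), cs.length (w * u) = n} :=
    ⟨um * c, mul_mem hum hc, by rw [← mul_assoc]⟩
  have := Nat.sInf_le hmem
  omega


section Longest

variable {I : Set B} {rI : W}

lemma inversion_of_refl_mem (hrm : rI ∈ Subgroup.closure (cs.simple '' I))
    (hmax : ∀ u ∈ Subgroup.closure (cs.simple '' I), cs.length u ≤ cs.length rI)
    {t : W} (ht : cs.IsReflection t) (htm : t ∈ Subgroup.closure (cs.simple '' I)) :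
    cs.IsRightInversion rI t := by
  refine ⟨ht, ?_⟩
  have h1 : cs.length (rI * t) ≤ cs.length rI := hmax _ (mul_mem hrm htm)
  have h2 : cs.length (rI * t) ≠ cs.length rI := ht.length_mul_left_ne rI
  omega

variable {AI : List B} (hAImem : ∀ b ∈ AI, b ∈ I) (hAIred : cs.IsReduced AI)
  (hAIprod : cs.wordProd AI = rI)

include hAImem hAIred hAIprod

lemma mem_ris_AI_iff (hrm : rI ∈ Subgroup.closure (cs.simple '' I))
    (hmax : ∀ u ∈ Subgroup.closure (cs.simple '' I), cs.length u ≤ cs.length rI)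
    {t : W} :
    t ∈ cs.rightInvSeq AI ↔ (cs.IsReflection t ∧ t ∈ Subgroup.closure (cs.simple '' I)) := by
  constructor
  · intro h
    exact ⟨cs.isReflection_of_mem_rightInvSeq AI h, ris_mem_parabolic cs I hAImem h⟩
  · rintro ⟨ht, htm⟩
    have hinv := inversion_of_refl_mem cs hrm hmax ht htm
    rw [← hAIprod] at hinv
    exact mem_ris_of_isRightInversion cs hAIred hinv

lemma eta_rI_eq_one (hrm : rI ∈ Subgroup.closure (cs.simple '' I))
    (hmax : ∀ u ∈ Subgroup.closure (cs.simple '' I), cs.length u ≤ cs.length rI)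
    {t : W} (ht : cs.IsReflection t) (htm : t ∈ Subgroup.closure (cs.simple '' I)) :
    eta cs rI t = 1 :=
  eta_one_of_isRightInversion cs (inversion_of_refl_mem cs hrm hmax ht htm)

lemma length_eq_card_filter (hrm : rI ∈ Subgroup.closure (cs.simple '' I))
    (hmax : ∀ u ∈ Subgroup.closure (cs.simple '' I), cs.length u ≤ cs.length rI)
    {x : W} (hx : x ∈ Subgroup.closure (cs.simple '' I)) :
    cs.length x
      = ((cs.rightInvSeq AI).toFinset.filter (fun t => eta cs x t = 1)).card := by
  classical
  obtain ⟨Ax, hAxmem, hAxred, hAxprod⟩ := exists_reduced_word_inI cs I hx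
  have hset : (cs.rightInvSeq Ax).toFinset
      = (cs.rightInvSeq AI).toFinset.filter (fun t => eta cs x t = 1) := by
    ext t
    simp only [List.mem_toFinset, Finset.mem_filter]
    constructor
    · intro ht
      refine ⟨?_, ?_⟩
      · rw [mem_ris_AI_iff cs hAImem hAIred hAIprod hrm hmax]
        exact ⟨cs.isReflection_of_mem_rightInvSeq Ax ht, ris_mem_parabolic cs I hAxmem ht⟩
      · rw [← hAxprod]
        exact eta_one_of_isRightInversion cs
          (cs.isRightInversion_of_mem_rightInvSeq hAxred ht)
    · rintro ⟨_, hη⟩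
      rw [← hAxprod] at hη
      exact mem_ris_of_eta_one cs hη
  have hcard : (cs.rightInvSeq Ax).toFinset.card = cs.length x := by
    rw [List.toFinset_card_of_nodup (hAxred.nodup_rightInvSeq), cs.length_rightInvSeq,
      ← hAxprod]
    exact hAxred.symm
  rw [← hset, hcard]

lemma factR (hrm : rI ∈ Subgroup.closure (cs.simple '' I))
    (hmax : ∀ u ∈ Subgroup.closure (cs.simple '' I), cs.length u ≤ cs.length rI)
    {v : W} (hv : v ∈ Subgroup.closure (cs.simple '' I)) :
    cs.length (v * rI) + cs.length v = cs.length rI := by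
  classical
  set Θ := (cs.rightInvSeq AI).toFinset with hΘ
  have hmemΘ : ∀ t, t ∈ Θ ↔ (cs.IsReflection t ∧ t ∈ Subgroup.closure (cs.simple '' I)) := by
    intro t
    rw [hΘ, List.mem_toFinset]
    exact mem_ris_AI_iff cs hAImem hAIred hAIprod hrm hmax
  have hΘcard : Θ.card = cs.length rI := by
    rw [hΘ, List.toFinset_card_of_nodup (hAIred.nodup_rightInvSeq), cs.length_rightInvSeq,
      ← hAIprod]
    exact hAIred.symm
  have h1 : cs.length (v * rI)
      = (Θ.filter (fun t => eta cs (v * rI) t = 1)).card :=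
    length_eq_card_filter cs hAImem hAIred hAIprod hrm hmax (mul_mem hv hrm)
  have h2 : ∀ t ∈ Θ, (eta cs (v * rI) t = 1 ↔ eta cs v (rI * t * rI⁻¹) = 0) := by
    intro t htΘ
    rw [hmemΘ] at htΘ
    rw [eta_mul, eta_rI_eq_one cs hAImem hAIred hAIprod hrm hmax htΘ.1 htΘ.2]
    rcases (by decide : ∀ x : ZMod 2, x = 0 ∨ x = 1) (eta cs v (rI * t * rI⁻¹)) with h | h <;>
      rw [h] <;> decide
  have h3 : (Θ.filter (fun t => eta cs (v * rI) t = 1)).card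
      = (Θ.filter (fun t => eta cs v (rI * t * rI⁻¹) = 0)).card := by
    congr 1
    apply Finset.filter_congr
    intro t ht
    simp only [h2 t ht]
  have hconjmem : ∀ t ∈ Θ, rI * t * rI⁻¹ ∈ Θ := by
    intro t ht
    rw [hmemΘ] at ht ⊢
    exact ⟨ht.1.conj rI, mul_mem (mul_mem hrm ht.2) (inv_mem hrm)⟩
  have hconjmem' : ∀ t ∈ Θ, rI⁻¹ * t * rI ∈ Θ := by
    intro t ht
    rw [hmemΘ] at ht ⊢
    refine ⟨?_, mul_mem (mul_mem (inv_mem hrm) ht.2) hrm⟩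
    have := ht.1.conj rI⁻¹
    simpa using this
  have h4 : (Θ.filter (fun t => eta cs v (rI * t * rI⁻¹) = 0)).card
      = (Θ.filter (fun t => eta cs v t = 0)).card := by
    apply Finset.card_bij (fun t _ => rI * t * rI⁻¹)
    · intro t ht
      rw [Finset.mem_filter] at ht ⊢
      exact ⟨hconjmem t ht.1, ht.2⟩
    · intro t1 h1' t2 h2' heq
      have := congrArg (fun z => rI⁻¹ * z * rI) heq
      simpa [mul_assoc] using this
    · intro u hu
      rw [Finset.mem_filter] at hu
      refine ⟨rI⁻¹ * u * rI, ?_, ?_⟩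
      · rw [Finset.mem_filter]
        constructor
        · exact hconjmem' u hu.1
        · have : rI * (rI⁻¹ * u * rI) * rI⁻¹ = u := by group
          rw [this]
          exact hu.2
      · group
  have h5 : (Θ.filter (fun t => eta cs v t = 0)).card
      + (Θ.filter (fun t => eta cs v t = 1)).card = Θ.card := by
    have hdisj : ∀ t ∈ Θ, (eta cs v t = 0 ↔ ¬ (eta cs v t = 1)) := by
      intro t _
      rcases (by decide : ∀ x : ZMod 2, x = 0 ∨ x = 1) (eta cs v t) with h | h <;>
        rw [h] <;> decide
    have := Finset.card_filter_add_card_filter_not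
      (s := Θ) (p := fun t => eta cs v t = 1)
    rw [← this]
    have : Θ.filter (fun t => eta cs v t = 0) = Θ.filter (fun t => ¬ (eta cs v t = 1)) := by
      apply Finset.filter_congr
      intro t ht
      simp only [hdisj t ht]
    rw [this]
    omega
  have h6 : cs.length v = (Θ.filter (fun t => eta cs v t = 1)).card :=
    length_eq_card_filter cs hAImem hAIred hAIprod hrm hmax hv
  rw [h1, h3, h4, ← hΘcard, h6]
  omega

lemma rI_sq (hrm : rI ∈ Subgroup.closure (cs.simple '' I))
    (hmax : ∀ u ∈ Subgroup.closure (cs.simple '' I), cs.length u ≤ cs.length rI) :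
    rI * rI = 1 := by
  have := factR cs hAImem hAIred hAIprod hrm hmax hrm
  have hzero : cs.length (rI * rI) = 0 := by omega
  rwa [cs.length_eq_zero_iff] at hzero

lemma factR_left (hrm : rI ∈ Subgroup.closure (cs.simple '' I))
    (hmax : ∀ u ∈ Subgroup.closure (cs.simple '' I), cs.length u ≤ cs.length rI)
    {v : W} (hv : v ∈ Subgroup.closure (cs.simple '' I)) :
    cs.length (rI * v) + cs.length v = cs.length rI := by
  have hinv : rI⁻¹ = rI :=
    inv_eq_of_mul_eq_one_right (rI_sq cs hAImem hAIred hAIprod hrm hmax)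
  have h1 : cs.length (rI * v) = cs.length (v⁻¹ * rI) := by
    rw [← cs.length_inv, mul_inv_rev, hinv]
  rw [h1]
  have := factR cs hAImem hAIred hAIprod hrm hmax (inv_mem hv)
  rw [cs.length_inv] at this
  omega

lemma descent_top (hrm : rI ∈ Subgroup.closure (cs.simple '' I))
    (hmax : ∀ u ∈ Subgroup.closure (cs.simple '' I), cs.length u ≤ cs.length rI)
    {u : W} (hu : u ∈ Subgroup.closure (cs.simple '' I))
    (hdes : ∀ i ∈ I, cs.length (u * cs.simple i) + 1 = cs.length u) :
    u = rI := by
  set y := u⁻¹ * rI with hy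
  have hym : y ∈ Subgroup.closure (cs.simple '' I) := mul_mem (inv_mem hu) hrm
  have hylen : cs.length y + cs.length u = cs.length rI := by
    have := factR cs hAImem hAIred hAIprod hrm hmax (inv_mem hu)
    rw [cs.length_inv] at this
    rw [hy]
    omega
  rcases eq_or_ne y 1 with hy1 | hyne
  · rw [hy] at hy1
    have h := congrArg (fun z => u * z) hy1
    simpa [mul_assoc] using h.symm
  · exfalso
    obtain ⟨ωy, hωymem, hωyred, hωyprod⟩ := exists_reduced_word_inI cs I hym
    have hωyne : ωy ≠ [] := by
      rintro rfl
      rw [cs.wordProd_nil] at hωyprod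
      exact hyne hωyprod.symm
    obtain ⟨i, ωy', rfl⟩ : ∃ i ωy', ωy = i :: ωy' := by
      cases ωy with
      | nil => exact absurd rfl hωyne
      | cons i ωy' => exact ⟨i, ωy', rfl⟩
    have hi : i ∈ I := hωymem i (by simp)
    have hy'red : cs.IsReduced ωy' := by
      have := hωyred.drop 1
      simpa using this
    have hsplit : y = cs.simple i * cs.wordProd ωy' := by
      rw [← hωyprod, cs.wordProd_cons]
    have hlen1 : cs.length (cs.wordProd ωy') + 1 = cs.length y := by
      rw [← hωyprod]
      have h2 := hωyred
      rw [CoxeterSystem.IsReduced] at h2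
      rw [h2]
      have h3 := hy'red
      rw [CoxeterSystem.IsReduced] at h3
      rw [h3]
      simp
    have hru : rI = (u * cs.simple i) * cs.wordProd ωy' := by
      rw [mul_assoc, ← hsplit, hy]
      group
    have hle := cs.length_mul_le (u * cs.simple i) (cs.wordProd ωy')
    rw [← hru] at hle
    have hd := hdes i hi
    omega

lemma ascent_coset (hrm : rI ∈ Subgroup.closure (cs.simple '' I))
    {w : W} (hasc : ∀ i ∈ I, cs.length (w * cs.simple i) = cs.length w + 1) :
    ∀ u ∈ Subgroup.closure (cs.simple '' I),
      cs.length (w * u) = cs.length w + cs.length u := by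
  obtain ⟨w₀, u₀, hu₀, heq, hadd⟩ := exists_coset_min cs I w
  have hu₀1 : u₀ = 1 := by
    by_contra hne
    obtain ⟨ωu, hωmem, hωred, hωprod⟩ := exists_reduced_word_inI cs I hu₀
    have hωne : ωu ≠ [] := by
      rintro rfl
      rw [cs.wordProd_nil] at hωprod
      exact hne hωprod.symm
    obtain ⟨ωu', i, rfl⟩ := ωu.eq_nil_or_concat'.resolve_left hωne
    have hi : i ∈ I := hωmem i (by simp)
    have husi : w * cs.simple i = w₀ * cs.wordProd ωu' := by
      rw [heq, ← hωprod, cs.wordProd_append, cs.wordProd_singleton]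
      simp [mul_assoc]
    have h1 : cs.length (w * cs.simple i)
        = cs.length w₀ + cs.length (cs.wordProd ωu') := by
      rw [husi]
      exact hadd _ (wordProd_mem_parabolic cs I (fun b hb => hωmem b (by simp [hb])))
    have h2 : cs.length (cs.wordProd ωu') ≤ ωu'.length := cs.length_wordProd_le ωu'
    have h3 : cs.length u₀ = ωu'.length + 1 := by
      rw [← hωprod]
      have h4 := hωred
      rw [CoxeterSystem.IsReduced] at h4
      rw [h4, length_append]
      simp
    have h5 : cs.length w = cs.length w₀ + cs.length u₀ := by
      rw [heq]
      exact hadd u₀ hu₀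
    have h6 := hasc i hi
    omega
  rw [hu₀1, mul_one] at heq
  rw [heq]
  exact hadd

lemma descent_coset (hrm : rI ∈ Subgroup.closure (cs.simple '' I))
    (hmax : ∀ u ∈ Subgroup.closure (cs.simple '' I), cs.length u ≤ cs.length rI)
    {w : W} (hdes : ∀ i ∈ I, cs.length (w * cs.simple i) + 1 = cs.length w) :
    cs.length (w * rI) + cs.length rI = cs.length w ∧
      ∀ t, cs.IsReflection t → t ∈ Subgroup.closure (cs.simple '' I) →
        cs.IsRightInversion w t := by
  obtain ⟨w₀, u₀, hu₀, heq, hadd⟩ := exists_coset_min cs I w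
  have hw : cs.length w = cs.length w₀ + cs.length u₀ := by
    rw [heq]; exact hadd u₀ hu₀
  have hu₀des : ∀ i ∈ I, cs.length (u₀ * cs.simple i) + 1 = cs.length u₀ := by
    intro i hi
    have h1 : w * cs.simple i = w₀ * (u₀ * cs.simple i) := by
      rw [heq, mul_assoc]
    have h2 : cs.length (w * cs.simple i)
        = cs.length w₀ + cs.length (u₀ * cs.simple i) := by
      rw [h1]
      exact hadd _ (mul_mem hu₀ (Subgroup.subset_closure ⟨i, hi, rfl⟩))
    have h3 := hdes i hi
    omega
  have hu₀top : u₀ = rI := descent_top cs hAImem hAIred hAIprod hrm hmax hu₀ hu₀des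
  have hwrI : w * rI = w₀ := by
    rw [heq, hu₀top, mul_assoc, rI_sq cs hAImem hAIred hAIprod hrm hmax, mul_one]
  constructor
  · rw [hwrI, hw, hu₀top]
  · intro t ht htm
    refine ⟨ht, ?_⟩
    have h1 : w * t = w₀ * (rI * t) := by
      rw [heq, hu₀top, mul_assoc]
    have h2 : cs.length (w * t) = cs.length w₀ + cs.length (rI * t) := by
      rw [h1]
      exact hadd _ (mul_mem hrm htm)
    have h3 := factR_left cs hAImem hAIred hAIprod hrm hmax htm
    have h4 : cs.length t ≠ 0 := by
      obtain ⟨c, hc⟩ := ht.odd_length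
      omega
    rw [hw, hu₀top]
    omega

end Longest

end Parabolic


/-! ### Part 3: folding -/

section Folding

lemma prodR_mem (P : Set (Set B)) (r : Set B → W) {l : List (Set B)}
    (hl : ∀ J ∈ l, J ∈ P) : (l.map r).prod ∈ Subgroup.closure (r '' P) := by
  induction l with
  | nil =>
    simp only [List.map_nil, List.prod_nil]
    exact one_mem _
  | cons J l ih =>
    simp only [List.map_cons, List.prod_cons]
    exact mul_mem (Subgroup.subset_closure ⟨J, hl J (mem_cons_self ..), rfl⟩)
      (ih (fun K hK => hl K (mem_cons_of_mem _ hK)))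

lemma eta_const_on_part (P : Set (Set B)) (r : Set B → W)
    (hlongest : ∀ I ∈ P, r I ∈ Subgroup.closure (cs.simple '' I) ∧
      ∀ u ∈ Subgroup.closure (cs.simple '' I), cs.length u ≤ cs.length (r I))
    (hadm : ∀ w ∈ Subgroup.closure (r '' P), ∀ I ∈ P,
      (∀ i ∈ I, cs.length (w * cs.simple i) = cs.length w + 1) ∨
      (∀ i ∈ I, cs.length (w * cs.simple i) + 1 = cs.length w))
    {x : W} (hx : x ∈ Subgroup.closure (r '' P)) {I : Set B} (hI : I ∈ P)
    {t t' : W} (ht : cs.IsReflection t) (htm : t ∈ Subgroup.closure (cs.simple '' I))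
    (ht' : cs.IsReflection t') (ht'm : t' ∈ Subgroup.closure (cs.simple '' I)) :
    eta cs x t = eta cs x t' := by
  obtain ⟨AI, hAImem, hAIred, hAIprod⟩ := exists_reduced_word_inI cs I (hlongest I hI).1
  rcases hadm x hx I hI with hasc | hdes
  · have hnot : ∀ u, cs.IsReflection u → u ∈ Subgroup.closure (cs.simple '' I) →
        eta cs x u = 0 := by
      intro u hu hum
      rcases (by decide : ∀ z : ZMod 2, z = 0 ∨ z = 1) (eta cs x u) with h | h
      · exact h
      · exfalso
        have hinv := isRightInversion_of_eta_one cs hu h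
        have hadd := ascent_coset cs hAImem hAIred hAIprod (hlongest I hI).1 hasc u hum
        have hlt := hinv.2
        have hne : cs.length u ≠ 0 := by
          obtain ⟨c, hc⟩ := hu.odd_length
          omega
        omega
    rw [hnot t ht htm, hnot t' ht' ht'm]
  · have h1 := (descent_coset cs hAImem hAIred hAIprod (hlongest I hI).1
      (hlongest I hI).2 hdes).2
    rw [eta_one_of_isRightInversion cs (h1 t ht htm),
      eta_one_of_isRightInversion cs (h1 t' ht' ht'm)]

lemma flatten_prod (r : Set B → W) (wd : Set B → List B) (P : Set (Set B))
    (hwd : ∀ J ∈ P, cs.wordProd (wd J) = r J) :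
    ∀ l : List (Set B), (∀ J ∈ l, J ∈ P) →
      cs.wordProd (l.map wd).flatten = (l.map r).prod := by
  intro l
  induction l with
  | nil => simp
  | cons J l ih =>
    intro hl
    simp only [List.map_cons, List.flatten_cons, List.prod_cons]
    rw [cs.wordProd_append, hwd J (hl J (mem_cons_self ..)),
      ih (fun K hK => hl K (mem_cons_of_mem _ hK))]

lemma flatten_len (r : Set B → W) (wd : Set B → List B) (P : Set (Set B))
    (hwd : ∀ J ∈ P, cs.IsReduced (wd J) ∧ cs.wordProd (wd J) = r J) :
    ∀ l : List (Set B), (∀ J ∈ l, J ∈ P) →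
      ((l.map wd).flatten).length = (l.map (fun I => cs.length (r I))).sum := by
  intro l
  induction l with
  | nil => simp
  | cons J l ih =>
    intro hl
    simp only [List.map_cons, List.flatten_cons, List.length_append, List.sum_cons]
    rw [ih (fun K hK => hl K (mem_cons_of_mem _ hK))]
    have hJ := hwd J (hl J (mem_cons_self ..))
    have : (wd J).length = cs.length (r J) := by
      rw [← hJ.2]
      exact hJ.1.symm
    rw [this]

lemma block_find (r : Set B → W) (wd : Set B → List B) (P : Set (Set B))
    (hwd : ∀ J ∈ P, cs.wordProd (wd J) = r J) :
    ∀ (l : List (Set B)), (∀ J ∈ l, J ∈ P) → ∀ t : W,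
      t ∈ cs.rightInvSeq (l.map wd).flatten →
      ∃ a J b, l = a ++ J :: b ∧
        ((b.map r).prod) * t * ((b.map r).prod)⁻¹ ∈ cs.rightInvSeq (wd J) := by
  intro l
  induction l with
  | nil =>
    intro _ t ht
    simp at ht
  | cons J l ih =>
    intro hl t ht
    simp only [List.map_cons, List.flatten_cons] at ht
    rw [ris_append, mem_append] at ht
    rcases ht with ht | ht
    · obtain ⟨t₀, ht₀, heq⟩ := List.mem_map.mp ht
      refine ⟨[], J, l, by simp, ?_⟩
      have hG : cs.wordProd (l.map wd).flatten = (l.map r).prod :=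
        flatten_prod cs r wd P hwd l (fun K hK => hl K (mem_cons_of_mem _ hK))
      have hre : (l.map r).prod * t * ((l.map r).prod)⁻¹ = t₀ := by
        rw [← heq, ← hG]
        group
      rw [hre]
      exact ht₀
    · obtain ⟨a, K, b, hab, hmem⟩ := ih (fun K hK => hl K (mem_cons_of_mem _ hK)) t ht
      exact ⟨J :: a, K, b, by rw [hab]; simp, hmem⟩

end Folding

end Stmt11Aux

open Stmt11Aux in
/-- Unfolding is additive on lengths: if `Ŝ` is an admissible partition of `S` (each part `I`
generates a finite parabolic with longest element `r I`, and every element of the folding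
subgroup `Ŵ = ⟨r I⟩` has uniform ascents/descents on each part), then for any word
`l = (I₁, …, I_k)` in the parts which is reduced (of minimal length among all words in the
generators `r I` with the same product), the ambient length of the product is
`ℓ(r I₁ ⋯ r I_k) = ∑ⱼ ℓ(r Iⱼ)`. -/
theorem stmt_11 {B W : Type*} [Group W] {M : CoxeterMatrix B} (cs : CoxeterSystem M W)
    (P : Set (Set B)) (hpart : ∀ b : B, ∃! I, I ∈ P ∧ b ∈ I)
    (r : Set B → W)
    (hfin : ∀ I ∈ P, (Subgroup.closure (cs.simple '' I) : Set W).Finite)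
    (hlongest : ∀ I ∈ P, r I ∈ Subgroup.closure (cs.simple '' I) ∧
      ∀ u ∈ Subgroup.closure (cs.simple '' I), cs.length u ≤ cs.length (r I))
    (hadm : ∀ w ∈ Subgroup.closure (r '' P), ∀ I ∈ P,
      (∀ i ∈ I, cs.length (w * cs.simple i) = cs.length w + 1) ∨
      (∀ i ∈ I, cs.length (w * cs.simple i) + 1 = cs.length w))
    (l : List (Set B)) (hl : ∀ I ∈ l, I ∈ P)
    (hred : ∀ l' : List (Set B), (∀ I ∈ l', I ∈ P) →
      (l'.map r).prod = (l.map r).prod → l.length ≤ l'.length) :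
    cs.length (l.map r).prod = (l.map (fun I => cs.length (r I))).sum := by
  classical
  suffices haux : ∀ n (l : List (Set B)), l.length = n → (∀ I ∈ l, I ∈ P) →
      (∀ l' : List (Set B), (∀ I ∈ l', I ∈ P) → (l'.map r).prod = (l.map r).prod →
        l.length ≤ l'.length) →
      cs.length (l.map r).prod = (l.map (fun I => cs.length (r I))).sum by
    exact haux l.length l rfl hl hred
  clear hl hred l
  intro n
  induction n using Nat.strong_induction_on with
  | _ n ihn =>
  intro l hlen hl hred
  rcases l.eq_nil_or_concat' with rfl | ⟨l', I, rfl⟩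
  · simp
  have hI : I ∈ P := hl I (by simp)
  have hl' : ∀ J ∈ l', J ∈ P := fun J hJ => hl J (by simp [hJ])
  have hprod : ((l' ++ [I]).map r).prod = (l'.map r).prod * r I := by
    simp
  have hred' : ∀ l'' : List (Set B), (∀ J ∈ l'', J ∈ P) →
      (l''.map r).prod = (l'.map r).prod → l'.length ≤ l''.length := by
    intro l'' h1 h2
    have hmem2 : ∀ J ∈ l'' ++ [I], J ∈ P := by
      intro J hJ
      rcases List.mem_append.mp hJ with h | h
      · exact h1 J h
      · have : J = I := by simpa using h
        rw [this]; exact hI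
    have h3 := hred (l'' ++ [I]) hmem2 (by simp [h2])
    simp only [List.length_append, List.length_cons, List.length_nil] at h3
    omega
  have hIH : cs.length (l'.map r).prod = (l'.map (fun I => cs.length (r I))).sum :=
    ihn l'.length (by simp at hlen; omega) l' rfl hl' hred'
  have hrI1 : r I ≠ 1 := by
    intro h1
    have h2 := hred l' hl' (by rw [hprod, h1, mul_one])
    simp only [List.length_append, List.length_cons, List.length_nil] at h2
    omega
  set v := (l'.map r).prod with hv
  have hvmem : v ∈ Subgroup.closure (r '' P) := prodR_mem P r hl'
  obtain ⟨AI, hAImem, hAIred, hAIprod⟩ := exists_reduced_word_inI cs I (hlongest I hI).1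
  rcases hadm v hvmem I hI with hasc | hdes
  · -- ascent case
    have h1 := ascent_coset cs hAImem hAIred hAIprod (hlongest I hI).1 hasc (r I)
      (hlongest I hI).1
    rw [hprod, h1, hIH]
    simp
  · -- descent case: contradiction with minimality
    exfalso
    have hInonempty : I.Nonempty := by
      by_contra hne
      rw [Set.not_nonempty_iff_eq_empty] at hne
      have hmem0 : r I ∈ Subgroup.closure (cs.simple '' I) := (hlongest I hI).1
      have himg : cs.simple '' I = ∅ := by rw [hne]; simp
      rw [himg, Subgroup.closure_empty, Subgroup.mem_bot] at hmem0
      exact hrI1 hmem0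
    obtain ⟨i, hiI⟩ := hInonempty
    have hwdex : ∀ J, ∃ ω : List B, J ∈ P →
        ((∀ b ∈ ω, b ∈ J) ∧ cs.IsReduced ω ∧ cs.wordProd ω = r J) := by
      intro J
      by_cases hJ : J ∈ P
      · obtain ⟨ω, h1, h2, h3⟩ := exists_reduced_word_inI cs J (hlongest J hJ).1
        exact ⟨ω, fun _ => ⟨h1, h2, h3⟩⟩
      · exact ⟨[], fun h => absurd h hJ⟩
    choose wd hwd using hwdex
    have hwdprod : ∀ J ∈ P, cs.wordProd (wd J) = r J := fun J hJ => (hwd J hJ).2.2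
    set A := (l'.map wd).flatten with hA
    have hπA : cs.wordProd A = v := flatten_prod cs r wd P hwdprod l' hl'
    have hAlen : A.length = (l'.map (fun I => cs.length (r I))).sum :=
      flatten_len cs r wd P (fun J hJ => ⟨(hwd J hJ).2.1, (hwd J hJ).2.2⟩) l' hl'
    have hAred : cs.IsReduced A := by
      rw [CoxeterSystem.IsReduced, hπA, hIH, hAlen]
    have hdesi := hdes i hiI
    have hinv : cs.IsRightInversion (cs.wordProd A) (cs.simple i) := by
      refine ⟨cs.isReflection_simple i, ?_⟩
      rw [hπA]
      omega
    have hmem : cs.simple i ∈ cs.rightInvSeq A :=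
      mem_ris_of_isRightInversion cs hAred hinv
    obtain ⟨a, J, b, hsplit, hblock⟩ := block_find cs r wd P hwdprod l' hl' _ hmem
    set G := (b.map r).prod with hG
    have hJP : J ∈ P := hl' J (by rw [hsplit]; simp)
    have hbP : ∀ K ∈ b, K ∈ P := fun K hK => hl' K (by rw [hsplit]; simp [hK])
    have haP : ∀ K ∈ a, K ∈ P := fun K hK => hl' K (by rw [hsplit]; simp [hK])
    have hGmem : G ∈ Subgroup.closure (r '' P) := prodR_mem P r hbP
    obtain ⟨AJ, hAJmem, hAJred, hAJprod⟩ := exists_reduced_word_inI cs J (hlongest J hJP).1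
    -- conjugation claim
    have hzerosum : ∀ x : ZMod 2, x + x = 0 := by decide
    have e1 : ∀ u : W,
        eta cs (r J) (G * u * G⁻¹) = eta cs (r J * G) u + eta cs G u := by
      intro u
      have h := eta_mul cs (r J) G u
      calc eta cs (r J) (G * u * G⁻¹)
          = eta cs G u + (eta cs G u + eta cs (r J) (G * u * G⁻¹)) := by
            rw [← add_assoc, hzerosum, zero_add]
        _ = eta cs G u + eta cs (r J * G) u := by rw [← h]
        _ = eta cs (r J * G) u + eta cs G u := by rw [add_comm]
    have hsimem : cs.simple i ∈ Subgroup.closure (cs.simple '' I) :=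
      Subgroup.subset_closure ⟨i, hiI, rfl⟩
    have hconj : ∀ t : W, cs.IsReflection t → t ∈ Subgroup.closure (cs.simple '' I) →
        G * t * G⁻¹ ∈ Subgroup.closure (cs.simple '' J) := by
      intro t ht htm
      have hkey : eta cs (r J) (G * t * G⁻¹) = eta cs (r J) (G * cs.simple i * G⁻¹) := by
        rw [e1 t, e1 (cs.simple i)]
        have hc1 : eta cs (r J * G) t = eta cs (r J * G) (cs.simple i) :=
          eta_const_on_part cs P r hlongest hadm
            (mul_mem (Subgroup.subset_closure ⟨J, hJP, rfl⟩) hGmem) hI ht htm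
            (cs.isReflection_simple i) hsimem
        have hc2 : eta cs G t = eta cs G (cs.simple i) :=
          eta_const_on_part cs P r hlongest hadm hGmem hI ht htm
            (cs.isReflection_simple i) hsimem
        rw [hc1, hc2]
      have ht₀inv : eta cs (r J) (G * cs.simple i * G⁻¹) = 1 := by
        have h1 : cs.IsReflection (G * cs.simple i * G⁻¹) :=
          (cs.isReflection_simple i).conj G
        have h2 : G * cs.simple i * G⁻¹ ∈ Subgroup.closure (cs.simple '' J) :=
          ris_mem_parabolic cs J (hwd J hJP).1 hblock
        exact eta_rI_eq_one cs hAJmem hAJred hAJprod (hlongest J hJP).1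
          (hlongest J hJP).2 h1 h2
      have h3 : eta cs (r J) (G * t * G⁻¹) = 1 := by rw [hkey, ht₀inv]
      have h4 : G * t * G⁻¹ ∈ cs.rightInvSeq AJ := by
        rw [← hAJprod] at h3
        exact mem_ris_of_eta_one cs h3
      exact ris_mem_parabolic cs J hAJmem h4
    have hhmem : G * (r I) * G⁻¹ ∈ Subgroup.closure (cs.simple '' J) := by
      set φ := (MulAut.conj G).toMonoidHom with hφ
      have h0 : G * (r I) * G⁻¹ ∈ Subgroup.map φ (Subgroup.closure (cs.simple '' I)) := by
        refine ⟨r I, (hlongest I hI).1, ?_⟩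
        simp [hφ]
      rw [MonoidHom.map_closure] at h0
      have hle : Subgroup.closure (φ '' (cs.simple '' I))
          ≤ Subgroup.closure (cs.simple '' J) := by
        rw [Subgroup.closure_le]
        rintro x ⟨y, ⟨k, hk, rfl⟩, rfl⟩
        have := hconj (cs.simple k) (cs.isReflection_simple k)
          (Subgroup.subset_closure ⟨k, hk, rfl⟩)
        simpa [hφ] using this
      exact hle h0
    have hhW : G * (r I) * G⁻¹ ∈ Subgroup.closure (r '' P) :=
      mul_mem (mul_mem hGmem (Subgroup.subset_closure ⟨I, hI, rfl⟩)) (inv_mem hGmem)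
    have hhne : G * (r I) * G⁻¹ ≠ 1 := by
      intro h1
      apply hrI1
      have h2 := congrArg (fun z => G⁻¹ * z * G) h1
      simpa [mul_assoc] using h2
    have hhrJ : G * (r I) * G⁻¹ = r J := by
      rcases hadm _ hhW J hJP with hasc2 | hdes2
      · exfalso
        have h5 := ascent_coset cs hAJmem hAJred hAJprod (hlongest J hJP).1 hasc2
          (G * (r I) * G⁻¹)⁻¹ (inv_mem hhmem)
        rw [mul_inv_cancel, cs.length_inv] at h5
        have h6 : cs.length (G * (r I) * G⁻¹) = 0 := by
          have := cs.length_one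
          omega
        rw [cs.length_eq_zero_iff] at h6
        exact hhne h6
      · exact descent_top cs hAJmem hAJred hAJprod (hlongest J hJP).1
          (hlongest J hJP).2 hhmem hdes2
    -- build shorter word
    have hkey2 : r J * (G * r I) = G := by
      rw [← hhrJ]
      calc G * r I * G⁻¹ * (G * r I) = G * (r I * r I) := by group
        _ = G := by
            rw [rI_sq cs hAImem hAIred hAIprod (hlongest I hI).1 (hlongest I hI).2, mul_one]
    have hnewprod : ((a ++ b).map r).prod = ((l' ++ [I]).map r).prod := by
      have hls : l' ++ [I] = a ++ J :: (b ++ [I]) := by rw [hsplit]; simp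
      calc ((a ++ b).map r).prod = (a.map r).prod * G := by
            rw [List.map_append, List.prod_append, ← hG]
        _ = (a.map r).prod * (r J * (G * r I)) := by rw [hkey2]
        _ = ((l' ++ [I]).map r).prod := by
            rw [hls]
            simp only [List.map_append, List.prod_append, List.map_cons, List.prod_cons,
              List.map_nil, List.prod_nil, mul_one, ← hG]
    have hfinal := hred (a ++ b)
      (fun K hK => by
        rcases List.mem_append.mp hK with h' | h'
        exacts [haP K h', hbP K h'])
      hnewprod
    have hlength : l'.length = a.length + b.length + 1 := by
      rw [hsplit]; simp; omega
    simp only [List.length_append, List.length_cons, List.length_nil] at hfinal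
    omega
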